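/- Let P be a finite ordered set (not necessarily N-free) with a minimal element a such that a is not maximal in P and every upper cover of a in P is a minimal element of P ∖ {a}. Let x and y be two incomparable elements of P ∖ {a}. Then the number of greedy linear extensions of P that put x before y equals the number of greedy linear extensions of P ∖ {a} that put x before y. -/

import Mathlib

set_option linter.unusedSectionVars false
set_option linter.unusedVariables false
set_option linter.unnecessarySimpa false


variable {α : Type*}

/-- `x` is a minimal element of the subposet induced on the finite set `s`. -/
def IsMinimalIn [PartialOrder α] (s : Finset α) (x : α) : Prop :=
  x ∈ s ∧ ∀ y ∈ s, ¬ y < x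

/-- A valid greedy choice of the next element, given the previously chosen element `p`
(`none` at the start) and the set `s` of not-yet-chosen elements: the next element must
be minimal among the remaining elements and, moreover, if some element strictly above `p`
is minimal among the remaining elements, then the next element must be strictly above `p`
(i.e. it is a minimal element of `U(p)` that can extend the linear extension). -/
def GreedyNext [PartialOrder α] (p : Option α) (s : Finset α) (x : α) : Prop :=
  IsMinimalIn s x ∧
    ∀ q : α, p = some q → (∃ v ∈ s, q < v ∧ IsMinimalIn s v) → q < x

/-- The list is a valid greedy enumeration of the finite set `s`, the previously chosen
element being `p` (`none` at the start). -/
def GreedyFrom [PartialOrder α] [DecidableEq α] :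
    Option α → Finset α → List α → Prop
  | _, s, [] => s = ∅
  | p, s, x :: l => GreedyNext p s x ∧ GreedyFrom (some x) (s.erase x) l

/-- `l` is a greedy linear extension of the finite poset `α`, presented as the list of
its elements in increasing order. -/
def IsGreedyLE [PartialOrder α] [DecidableEq α] [Fintype α] (l : List α) : Prop :=
  GreedyFrom (none : Option α) Finset.univ l

section Basic
variable [PartialOrder α] [DecidableEq α]

lemma gf_mem {p : Option α} {s : Finset α} {l : List α} (h : GreedyFrom p s l) :
    ∀ z ∈ l, z ∈ s := by
  induction l generalizing p s with
  | nil => intro z hz; simp at hz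
  | cons w t ih =>
    intro z hz
    rcases List.mem_cons.1 hz with rfl | hz
    · exact h.1.1.1
    · exact Finset.mem_of_mem_erase (ih h.2 z hz)

lemma gf_complete {p : Option α} {s : Finset α} {l : List α} (h : GreedyFrom p s l) :
    ∀ z ∈ s, z ∈ l := by
  induction l generalizing p s with
  | nil => intro z hz; rw [show s = ∅ from h] at hz; simp at hz
  | cons w t ih =>
    intro z hz
    by_cases hzw : z = w
    · simp [hzw]
    · exact List.mem_cons_of_mem _ (ih h.2 z (Finset.mem_erase.2 ⟨hzw, hz⟩))

end Basic

section Main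
variable [PartialOrder α] [DecidableEq α] [Fintype α]
variable {a : α} (hmin : IsMin a) (hmax : ¬ IsMax a)
  (hcov : ∀ b : α, a ⋖ b → ∀ u : α, u ≠ a → ¬ u < b)

open Classical in
noncomputable def insA (a : α) : List α → List α
  | [] => [a]
  | w :: t => if a < w then a :: w :: t else w :: insA a t

/-- In the remaining set containing `a`, nothing above `a` is minimal. -/
lemma not_min_of_above {s : Finset α} (ha : a ∈ s) {v : α} (hav : a < v) :
    ¬ IsMinimalIn s v := fun hv => hv.2 a ha hav

include hmin hcov in
/-- key junction fact: if `q` is not `a` and everything above `a` is still in `s` with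
`a ∈ s`, then there is no `v ∈ s.erase a` minimal in `s.erase a` above `q` unless there
is already one minimal in `s`. -/
lemma junction {s : Finset α} (ha : a ∈ s) (hinv : ∀ v, a < v → v ∈ s)
    {q : α} (hq : q ≠ a)
    (hno : ¬ ∃ v ∈ s, q < v ∧ IsMinimalIn s v)
    (hyp : ∃ v ∈ s.erase a, q < v ∧ IsMinimalIn (s.erase a) v) : False := by
  obtain ⟨v, hvs, hqv, hvmin⟩ := hyp
  have hvs' : v ∈ s := Finset.mem_of_mem_erase hvs
  have hnotmin : ¬ IsMinimalIn s v := fun h => hno ⟨v, hvs', hqv, h⟩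
  -- the only possible element of `s` below `v` is `a`
  have hav : a < v := by
    by_contra hav
    refine hnotmin ⟨hvs', fun u hu hlt => ?_⟩
    rcases eq_or_ne u a with rfl | hua
    · exact hav hlt
    · exact hvmin.2 u (Finset.mem_erase.2 ⟨hua, hu⟩) hlt
  obtain ⟨b, hb, hbv⟩ := exists_covBy_le_of_lt hav
  rcases eq_or_lt_of_le hbv with rfl | hblt
  · exact hcov b hb q hq hqv
  · have hbs : b ∈ s.erase a := Finset.mem_erase.2 ⟨hb.lt.ne', hinv b hb.lt⟩
    exact hvmin.2 b hbs hblt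

include hmin hcov in
lemma del {p : Option α} {s : Finset α} {l : List α}
    (hg : GreedyFrom p s l) (ha : a ∈ s) (hinv : ∀ v, a < v → v ∈ s)
    (hp : ∀ q, p = some q → q ≠ a) :
    GreedyFrom p (s.erase a) (l.erase a) := by
  induction l generalizing p s with
  | nil => exact absurd (hg ▸ ha) (Finset.notMem_empty a)
  | cons w t ih =>
    rcases eq_or_ne w a with rfl | hwa
    · rw [List.erase_cons_head]
      match t, hg.2 with
      | [], h2 => exact h2
      | u :: t', h2 =>
        refine ⟨⟨h2.1.1, ?_⟩, h2.2⟩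
        intro q hq hyp
        exact absurd hyp (fun hyp => junction hmin hcov ha hinv (hp q hq)
          (fun hno => absurd (hg.1.2 q hq hno) (hmin.not_lt)) hyp)
    · rw [List.erase_cons_tail (by simp [hwa])]
      have hwmin := hg.1.1
      have hws : w ∈ s.erase a := Finset.mem_erase.2 ⟨hwa, hwmin.1⟩
      have haw : ¬ a < w := fun h => (hwmin.2 a ha h)
      refine ⟨⟨⟨hws, fun u hu => hwmin.2 u (Finset.mem_of_mem_erase hu)⟩, ?_⟩, ?_⟩
      · intro q hq hyp
        by_cases hno : ∃ v ∈ s, q < v ∧ IsMinimalIn s v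
        · exact hg.1.2 q hq hno
        · exact absurd hyp (fun hyp => junction hmin hcov ha hinv (hp q hq) hno hyp)
      · rw [Finset.erase_right_comm]
        refine ih hg.2 (Finset.mem_erase.2 ⟨Ne.symm hwa, ha⟩) ?_ ?_
        · intro v hv
          refine Finset.mem_erase.2 ⟨?_, hinv v hv⟩
          rintro rfl
          exact haw hv
        · exact fun q hq => (Option.some.inj hq) ▸ hwa


include hmax in
lemma cover_exists : ∃ b, a ⋖ b := by
  obtain ⟨c, hc⟩ := not_isMax_iff.1 hmax
  obtain ⟨b, hb, _⟩ := exists_covBy_le_of_lt hc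
  exact ⟨b, hb⟩

include hcov in
lemma cover_min_in_erase {s : Finset α} (hinv : ∀ v, a < v → v ∈ s)
    {b : α} (hb : a ⋖ b) : IsMinimalIn (s.erase a) b := by
  refine ⟨Finset.mem_erase.2 ⟨hb.lt.ne', hinv b hb.lt⟩, fun u hu hub => ?_⟩
  exact hcov b hb u (Finset.mem_erase.1 hu).1 hub

include hmin hmax hcov in
lemma ins {p : Option α} {s : Finset α} {l : List α}
    (hg : GreedyFrom p (s.erase a) l) (ha : a ∈ s) (hinv : ∀ v, a < v → v ∈ s)
    (hp : ∀ q, p = some q → q ≠ a) :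
    GreedyFrom p s (insA a l) := by
  induction l generalizing p s with
  | nil =>
    refine ⟨⟨⟨ha, fun u _ h => hmin.not_lt h⟩, ?_⟩, hg⟩
    rintro q hq ⟨v, hv, hqv, hvmin⟩
    rcases eq_or_ne v a with rfl | hva
    · exact hqv
    · exact absurd (hg ▸ Finset.mem_erase.2 ⟨hva, hv⟩ : v ∈ (∅ : Finset α))
        (Finset.notMem_empty v)
  | cons w t ih =>
    have hwmin := hg.1.1
    have hwa : w ≠ a := (Finset.mem_erase.1 hwmin.1).1
    by_cases haw : a < w
    · rw [show insA a (w :: t) = a :: w :: t from by simp [insA, haw]]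
      refine ⟨⟨⟨ha, fun u _ h => hmin.not_lt h⟩, ?_⟩, ?_, hg.2⟩
      · intro q hq hyp
        refine absurd hyp (fun hyp => ?_)
        obtain ⟨v, hv, hqv, hvmin⟩ := hyp
        have hva : v ≠ a := fun h => hmin.not_lt (h ▸ hqv)
        have hqw : q < w := hg.1.2 q hq
          ⟨v, Finset.mem_erase.2 ⟨hva, hv⟩, hqv,
            ⟨Finset.mem_erase.2 ⟨hva, hv⟩, fun u hu => hvmin.2 u (Finset.mem_of_mem_erase hu)⟩⟩
        obtain ⟨b, hb, hbw⟩ := exists_covBy_le_of_lt haw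
        rcases eq_or_lt_of_le hbw with rfl | hblt
        · exact hcov b hb q (hp q hq) hqw
        · exact hwmin.2 b (cover_min_in_erase hcov hinv hb).1 hblt
      · exact ⟨hwmin, fun q hq _ => (Option.some.inj hq) ▸ haw⟩
    · rw [show insA a (w :: t) = w :: insA a t from by simp [insA, haw]]
      refine ⟨⟨⟨Finset.mem_of_mem_erase hwmin.1, ?_⟩, ?_⟩, ?_⟩
      · intro u hu hlt
        rcases eq_or_ne u a with rfl | hua
        · exact haw hlt
        · exact hwmin.2 u (Finset.mem_erase.2 ⟨hua, hu⟩) hlt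
      · intro q hq hyp
        obtain ⟨v, hv, hqv, hvmin⟩ := hyp
        have hva : v ≠ a := fun h => hmin.not_lt (h ▸ hqv)
        exact hg.1.2 q hq ⟨v, Finset.mem_erase.2 ⟨hva, hv⟩, hqv,
          ⟨Finset.mem_erase.2 ⟨hva, hv⟩, fun u hu => hvmin.2 u (Finset.mem_of_mem_erase hu)⟩⟩
      · have := hg.2
        rw [Finset.erase_right_comm] at this
        refine ih this (Finset.mem_erase.2 ⟨Ne.symm hwa, ha⟩) ?_
          (fun q hq => (Option.some.inj hq) ▸ hwa)
        intro v hv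
        exact Finset.mem_erase.2 ⟨fun h => haw (h ▸ hv), hinv v hv⟩


lemma gf_nodup {p : Option α} {s : Finset α} {l : List α} (h : GreedyFrom p s l) :
    l.Nodup := by
  induction l generalizing p s with
  | nil => exact List.nodup_nil
  | cons w t ih =>
    refine List.nodup_cons.2 ⟨fun hw => ?_, ih h.2⟩
    exact (Finset.mem_erase.1 (gf_mem h.2 w hw)).1 rfl

include hmin hmax hcov in
lemma insEq {p : Option α} {s : Finset α} {l : List α}
    (hg : GreedyFrom p s l) (ha : a ∈ s) (hinv : ∀ v, a < v → v ∈ s)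
    (hp : ∀ q, p = some q → q ≠ a) :
    insA a (l.erase a) = l := by
  induction l generalizing p s with
  | nil => exact absurd (hg ▸ ha) (Finset.notMem_empty a)
  | cons w t ih =>
    by_cases hwa0 : w = a
    · subst hwa0
      rw [List.erase_cons_head]
      match t, hg.2 with
      | [], h2 =>
        obtain ⟨b, hb⟩ := cover_exists hmax
        exact absurd (h2 ▸ (cover_min_in_erase hcov hinv hb).1 : b ∈ (∅ : Finset α))
          (Finset.notMem_empty b)
      | u :: t', h2 =>
        obtain ⟨b, hb⟩ := cover_exists hmax
        have hbmin := cover_min_in_erase hcov hinv hb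
        have hau : w < u := h2.1.2 w rfl ⟨b, hbmin.1, hb.lt, hbmin⟩
        simp [insA, hau]
    · have hwa : w ≠ a := hwa0
      rw [List.erase_cons_tail (by simp [hwa])]
      have hwmin := hg.1.1
      have haw : ¬ a < w := fun h => (hwmin.2 a ha h)
      rw [show insA a (w :: (t.erase a)) = w :: insA a (t.erase a) from by simp [insA, haw]]
      congr 1
      refine ih hg.2 (Finset.mem_erase.2 ⟨Ne.symm hwa, ha⟩) ?_
        (fun q hq => (Option.some.inj hq) ▸ hwa)
      intro v hv
      exact Finset.mem_erase.2 ⟨fun h => haw (h ▸ hv), hinv v hv⟩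

lemma eraseIns {m : List α} (hm : a ∉ m) : (insA a m).erase a = m := by
  induction m with
  | nil => simp [insA]
  | cons w t ih =>
    have hwa : w ≠ a := fun h => hm (h ▸ List.mem_cons_self (a := w) (l := t))
    by_cases haw : a < w
    · simp [insA, haw]
    · rw [show insA a (w :: t) = w :: insA a t from by simp [insA, haw],
        List.erase_cons_tail (by simp [hwa])]
      rw [ih (fun h => hm (List.mem_cons_of_mem _ h))]

lemma idx_erase {l : List α} {x y : α} (hx : x ≠ a) (hy : y ≠ a) (hne : x ≠ y)
    (hxl : x ∈ l) (hyl : y ∈ l) :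
    (List.idxOf x (l.erase a) < List.idxOf y (l.erase a)) ↔
      (List.idxOf x l < List.idxOf y l) := by
  induction l with
  | nil => simp at hxl
  | cons z t ih =>
    rcases eq_or_ne z a with rfl | hza
    · rw [List.erase_cons_head]
      have hxz : x ≠ z := hx
      have hyz : y ≠ z := hy
      rw [List.idxOf_cons_ne _ (Ne.symm hxz), List.idxOf_cons_ne _ (Ne.symm hyz)]
      simpa using Iff.rfl
    · rw [List.erase_cons_tail (by simp [hza])]
      rcases eq_or_ne x z with rfl | hxz
      · rw [List.idxOf_cons_self, List.idxOf_cons_self,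
          List.idxOf_cons_ne _ hne, List.idxOf_cons_ne _ hne]
        simp
      · rcases eq_or_ne y z with rfl | hyz
        · rw [List.idxOf_cons_self, List.idxOf_cons_self,
            List.idxOf_cons_ne _ (Ne.symm hne), List.idxOf_cons_ne _ (Ne.symm hne)]
          simp
        · rw [List.idxOf_cons_ne _ (Ne.symm hxz), List.idxOf_cons_ne _ (Ne.symm hyz),
            List.idxOf_cons_ne _ (Ne.symm hxz), List.idxOf_cons_ne _ (Ne.symm hyz)]
          have hxt : x ∈ t := by
            rcases List.mem_cons.1 hxl with h | h
            · exact absurd h hxz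
            · exact h
          have hyt : y ∈ t := by
            rcases List.mem_cons.1 hyl with h | h
            · exact absurd h hyz
            · exact h
          simpa using ih hxt hyt


lemma idx_map {γ : Type*} [BEq γ] [LawfulBEq γ] {f : γ → α} (hf : Function.Injective f)
    (l : List γ) (b : γ) : List.idxOf (f b) (l.map f) = List.idxOf b l := by
  induction l with
  | nil => simp
  | cons w t ih =>
    rcases eq_or_ne b w with rfl | hbw
    · simp [List.idxOf_cons_self]
    · rw [List.map_cons, List.idxOf_cons_ne _ (fun h => hbw (hf h).symm),
        List.idxOf_cons_ne _ (Ne.symm hbw), ih]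

omit [Fintype α] in
lemma min_transfer (s : Finset {z : α // z ≠ a}) (v : {z : α // z ≠ a}) :
    IsMinimalIn s v ↔ IsMinimalIn (s.map (Function.Embedding.subtype _)) v.1 := by
  constructor
  · rintro ⟨hv, hmin⟩
    refine ⟨Finset.mem_map.2 ⟨v, hv, rfl⟩, ?_⟩
    rintro y hy hlt
    obtain ⟨u, hu, rfl⟩ := Finset.mem_map.1 hy
    exact hmin u hu hlt
  · rintro ⟨hv, hmin⟩
    obtain ⟨u, hu, huv⟩ := Finset.mem_map.1 hv
    have : u = v := Subtype.ext huv
    subst this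
    exact ⟨hu, fun y hy hlt => hmin y.1 (Finset.mem_map.2 ⟨y, hy, rfl⟩) hlt⟩

omit [Fintype α] in
lemma next_transfer (p : Option {z : α // z ≠ a}) (s : Finset {z : α // z ≠ a})
    (x : {z : α // z ≠ a}) :
    GreedyNext p s x ↔
      GreedyNext (p.map (↑)) (s.map (Function.Embedding.subtype _)) x.1 := by
  have hex : ∀ q : {z : α // z ≠ a},
      ((∃ v ∈ s, q < v ∧ IsMinimalIn s v) ↔
        (∃ v ∈ s.map (Function.Embedding.subtype _), q.1 < v ∧
          IsMinimalIn (s.map (Function.Embedding.subtype _)) v)) := by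
    intro q
    constructor
    · rintro ⟨v, hv, hqv, hvm⟩
      exact ⟨v.1, Finset.mem_map.2 ⟨v, hv, rfl⟩, hqv, (min_transfer s v).1 hvm⟩
    · rintro ⟨v, hv, hqv, hvm⟩
      obtain ⟨u, hu, rfl⟩ := Finset.mem_map.1 hv
      exact ⟨u, hu, hqv, (min_transfer s u).2 hvm⟩
  constructor
  · rintro ⟨hxm, hcond⟩
    refine ⟨(min_transfer s x).1 hxm, ?_⟩
    intro q hq hyp
    match p, hq with
    | some q', rfl =>
      exact hcond q' rfl ((hex q').2 (by simpa using hyp))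
  · rintro ⟨hxm, hcond⟩
    refine ⟨(min_transfer s x).2 hxm, ?_⟩
    rintro q rfl hyp
    exact hcond q.1 rfl (by simpa using (hex q).1 hyp)

omit [Fintype α] in
lemma gf_transfer (p : Option {z : α // z ≠ a}) (s : Finset {z : α // z ≠ a})
    (l : List {z : α // z ≠ a}) :
    GreedyFrom p s l ↔
      GreedyFrom (p.map (↑)) (s.map (Function.Embedding.subtype _))
        (l.map (↑)) := by
  induction l generalizing p s with
  | nil =>
    show s = ∅ ↔ _
    simp [GreedyFrom, Finset.map_eq_empty]
  | cons w t ih =>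
    show _ ∧ _ ↔ _ ∧ _
    rw [next_transfer, ih, Finset.map_erase]
    rfl

end Main

section Final
variable [PartialOrder α] [DecidableEq α]

def Fdel (a : α) (l : List α) : List {z : α // z ≠ a} :=
  l.filterMap (fun z => if h : z = a then none else some ⟨z, h⟩)

lemma Fdel_val (a : α) (l : List α) :
    (Fdel a l).map (↑) = l.filter (· != a) := by
  induction l with
  | nil => simp [Fdel]
  | cons z t ih =>
    by_cases hz : z = a
    · subst hz
      rw [show Fdel z (z :: t) = Fdel z t from by simp [Fdel, List.filterMap_cons], ih]
      simp
    · rw [show Fdel a (z :: t) = ⟨z, hz⟩ :: Fdel a t from by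
        simp [Fdel, List.filterMap_cons, hz], List.map_cons, ih]
      simp [hz]

lemma univ_map_subtype [Fintype α] (a : α) :
    (Finset.univ : Finset {z : α // z ≠ a}).map (Function.Embedding.subtype _) =
      Finset.univ.erase a := by
  ext z
  simp [Finset.mem_map, Finset.mem_erase]

end Final


/-- Let `P` be a finite ordered set with a minimal element `a` which is not maximal and
such that every upper cover of `a` is minimal in `P ∖ {a}`.  If `x` and `y` are two
incomparable elements of `P ∖ {a}`, then the number of greedy linear extensions of `P`
putting `x` before `y` equals the number of greedy linear extensions of `P ∖ {a}`
putting `x` before `y`. -/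
theorem card_greedy_before_erase_min [Fintype α] [DecidableEq α] [PartialOrder α]
    (a : α) (hmin : IsMin a) (hmax : ¬ IsMax a)
    (hcov : ∀ b : α, a ⋖ b → ∀ u : α, u ≠ a → ¬ u < b)
    (x y : α) (hx : x ≠ a) (hy : y ≠ a) (hxy : ¬ x ≤ y) (hyx : ¬ y ≤ x) :
    {l : List α | IsGreedyLE l ∧ l.idxOf x < l.idxOf y}.ncard =
      {l : List {z : α // z ≠ a} |
        IsGreedyLE l ∧ l.idxOf ⟨x, hx⟩ < l.idxOf ⟨y, hy⟩}.ncard := by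
  classical
  have hxy' : x ≠ y := fun h => hxy (h ▸ le_refl x)
  set A := {l : List α | IsGreedyLE l ∧ l.idxOf x < l.idxOf y} with hA
  set B := {l : List {z : α // z ≠ a} |
      IsGreedyLE l ∧ l.idxOf ⟨x, hx⟩ < l.idxOf ⟨y, hy⟩} with hB
  -- the deletion map
  have hFe : ∀ l : List α, l.Nodup → (Fdel a l).map (↑) = l.erase a := by
    intro l hl
    rw [Fdel_val, ← List.Nodup.erase_eq_filter hl]
  -- erased lists of members of A are greedy on `univ.erase a`
  have hmemA : ∀ l ∈ A, Fdel a l ∈ B ∧ insA a (l.erase a) = l := by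
    rintro l ⟨hgl, hil⟩
    have hnd : l.Nodup := gf_nodup hgl
    have hdel : GreedyFrom (none : Option α) (Finset.univ.erase a) (l.erase a) :=
      del hmin hcov hgl (Finset.mem_univ a) (fun v _ => Finset.mem_univ v)
        (fun q hq => by simp at hq)
    have hins : insA a (l.erase a) = l :=
      insEq hmin hmax hcov hgl (Finset.mem_univ a) (fun v _ => Finset.mem_univ v)
        (fun q hq => by simp at hq)
    have hxl : x ∈ l := gf_complete hgl x (Finset.mem_univ x)
    have hyl : y ∈ l := gf_complete hgl y (Finset.mem_univ y)
    refine ⟨⟨?_, ?_⟩, hins⟩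
    · show GreedyFrom _ _ _
      rw [gf_transfer, univ_map_subtype, hFe l hnd]
      exact hdel
    · have h1 : (Fdel a l).idxOf ⟨x, hx⟩ = (l.erase a).idxOf x := by
        rw [← hFe l hnd]
        exact (idx_map Subtype.val_injective (Fdel a l) ⟨x, hx⟩).symm
      have h2 : (Fdel a l).idxOf ⟨y, hy⟩ = (l.erase a).idxOf y := by
        rw [← hFe l hnd]
        exact (idx_map Subtype.val_injective (Fdel a l) ⟨y, hy⟩).symm
      rw [h1, h2]
      exact (idx_erase hx hy hxy' hxl hyl).2 hil
  have hinj : Set.InjOn (Fdel a) A := by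
    intro l₁ h₁ l₂ h₂ hF
    have e1 := (hmemA l₁ h₁).2
    have e2 := (hmemA l₂ h₂).2
    have hnd₁ : l₁.Nodup := gf_nodup h₁.1
    have hnd₂ : l₂.Nodup := gf_nodup h₂.1
    have : l₁.erase a = l₂.erase a := by
      rw [← hFe l₁ hnd₁, ← hFe l₂ hnd₂, hF]
    rw [← e1, this, e2]
  have hsurj : ∀ l' ∈ B, ∃ l ∈ A, Fdel a l = l' := by
    rintro l' ⟨hgl', hil'⟩
    set m : List α := l'.map (↑) with hm
    have hmg : GreedyFrom (none : Option α) (Finset.univ.erase a) m := by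
      have := (gf_transfer none Finset.univ l').1 hgl'
      rwa [univ_map_subtype] at this
    have ham : a ∉ m := by
      rw [hm]
      simp only [List.mem_map]
      rintro ⟨u, _, hu⟩
      exact u.2 hu
    have hgg : IsGreedyLE (insA a m) :=
      ins hmin hmax hcov (by rwa [show Finset.univ.erase a = Finset.univ.erase a from rfl] at hmg)
        (Finset.mem_univ a) (fun v _ => Finset.mem_univ v) (fun q hq => by simp at hq)
    have hernd : (insA a m).Nodup := gf_nodup hgg
    have her : (insA a m).erase a = m := eraseIns ham
    have hFg : Fdel a (insA a m) = l' := by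
      have hmap : (Fdel a (insA a m)).map (Subtype.val) = l'.map (Subtype.val) := by
        rw [show ((Fdel a (insA a m)).map (Subtype.val) : List α) =
          (Fdel a (insA a m)).map (↑) from rfl, hFe _ hernd, her]
      exact List.map_injective_iff.2 Subtype.val_injective hmap
    have hxg : x ∈ insA a m := gf_complete hgg x (Finset.mem_univ x)
    have hyg : y ∈ insA a m := gf_complete hgg y (Finset.mem_univ y)
    have hidx : (insA a m).idxOf x < (insA a m).idxOf y := by
      refine (idx_erase hx hy hxy' hxg hyg).1 ?_
      rw [her, hm, idx_map Subtype.val_injective l' (⟨x, hx⟩ : {z : α // z ≠ a}),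
        idx_map Subtype.val_injective l' (⟨y, hy⟩ : {z : α // z ≠ a})]
      exact hil'
    exact ⟨insA a m, ⟨hgg, hidx⟩, hFg⟩
  have himg : Fdel a '' A = B := by
    apply Set.eq_of_subset_of_subset
    · rintro _ ⟨l, hl, rfl⟩
      exact (hmemA l hl).1
    · intro l' hl'
      obtain ⟨l, hl, hFl⟩ := hsurj l' hl'
      exact ⟨l, hl, hFl⟩
  rw [← himg, Set.ncard_image_of_injOn hinj]
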